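/- Let A be a contractible Banach algebra and E a unital Banach A-bimodule. If F is a closed sub-bimodule of E that is topologically complemented as a Banach subspace, then F admits a topological complement in E which is also a closed sub-bimodule. -/

import Mathlib

/-- A Banach `A`-bimodule structure on a normed space `E`. -/
structure BanachBimodule (A E : Type) [NonUnitalNormedRing A] [NormedSpace ℂ A]
    [NormedAddCommGroup E] [NormedSpace ℂ E] where
  l : A →L[ℂ] E →L[ℂ] E
  r : A →L[ℂ] E →L[ℂ] E
  l_mul : ∀ a b x, l (a * b) x = l a (l b x)
  r_mul : ∀ a b x, r (a * b) x = r b (r a x)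
  lr_comm : ∀ a b x, l a (r b x) = r b (l a x)

/-- A Banach algebra `A` is contractible if every bounded derivation from `A`
into any Banach `A`-bimodule is inner. -/
def Contractible (A : Type) [NonUnitalNormedRing A] [NormedSpace ℂ A] : Prop :=
  ∀ (E : Type) [NormedAddCommGroup E] [NormedSpace ℂ E] [CompleteSpace E],
    ∀ (B : BanachBimodule A E) (D : A →L[ℂ] E),
      (∀ a b, D (a * b) = B.l a (D b) + B.r b (D a)) →
      ∃ v : E, ∀ a, D a = B.l a v - B.r a v


/-- Restrict a bounded bilinear action to an invariant submodule. -/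
noncomputable def restrictAction {A X : Type} [NonUnitalNormedRing A] [NormedSpace ℂ A]
    [NormedAddCommGroup X] [NormedSpace ℂ X]
    (l : A →L[ℂ] X →L[ℂ] X) (N : Submodule ℂ X)
    (h : ∀ a x, x ∈ N → l a x ∈ N) : A →L[ℂ] N →L[ℂ] N :=
  LinearMap.mkContinuous
    { toFun := fun a => ((l a).comp N.subtypeL).codRestrict N (fun x => h a x x.2)
      map_add' := fun a b => by ext x; simp; rfl
      map_smul' := fun c a => by ext x; simp; rfl }
    ‖l‖ (fun a => ContinuousLinearMap.opNorm_le_bound _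
      (by positivity) (fun x => by
        have h1 : ‖l a (x : X)‖ ≤ ‖l a‖ * ‖(x : X)‖ := (l a).le_opNorm x
        have h2 : ‖l a‖ * ‖(x : X)‖ ≤ ‖l‖ * ‖a‖ * ‖(x : X)‖ :=
          mul_le_mul_of_nonneg_right (l.le_opNorm a) (norm_nonneg _)
        exact h1.trans h2))

@[simp] lemma restrictAction_apply {A X : Type} [NonUnitalNormedRing A] [NormedSpace ℂ A]
    [NormedAddCommGroup X] [NormedSpace ℂ X]
    (l : A →L[ℂ] X →L[ℂ] X) (N : Submodule ℂ X)
    (h : ∀ a x, x ∈ N → l a x ∈ N) (a : A) (x : N) :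
    ((restrictAction l N h a x : N) : X) = l a (x : X) := rfl

lemma exists_inner {A : Type} [NonUnitalNormedRing A] [NormedSpace ℂ A]
    (hA : Contractible A)
    {X : Type} [NormedAddCommGroup X] [NormedSpace ℂ X] [CompleteSpace X]
    (l r : A →L[ℂ] X →L[ℂ] X)
    (l_mul : ∀ a b x, l (a * b) x = l a (l b x))
    (r_mul : ∀ a b x, r (a * b) x = r b (r a x))
    (lr_comm : ∀ a b x, l a (r b x) = r b (l a x))
    (N : Submodule ℂ X) (hN : IsClosed (N : Set X))
    (hNl : ∀ a x, x ∈ N → l a x ∈ N) (hNr : ∀ a x, x ∈ N → r a x ∈ N)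
    (D : A →L[ℂ] X) (hD : ∀ a, D a ∈ N)
    (hder : ∀ a b, D (a * b) = l a (D b) + r b (D a)) :
    ∃ v ∈ N, ∀ a, D a = l a v - r a v := by
  haveI : CompleteSpace N := hN.completeSpace_coe
  set B' : BanachBimodule A N :=
    { l := restrictAction l N hNl
      r := restrictAction r N hNr
      l_mul := fun a b x => Subtype.ext (l_mul a b x)
      r_mul := fun a b x => Subtype.ext (r_mul a b x)
      lr_comm := fun a b x => Subtype.ext (lr_comm a b x) }
  obtain ⟨v, hv⟩ := hA N B' (D.codRestrict N hD)
    (fun a b => Subtype.ext (by simpa [B'] using hder a b))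
  exact ⟨(v : X), v.2, fun a => by
    have := congrArg (Subtype.val) (hv a)
    simpa [B'] using this⟩

/-- over a contractible Banach algebra, a topologically
complemented closed sub-bimodule of a unital Banach bimodule admits a
topological complement which is itself a closed sub-bimodule. -/
theorem complemented_subbimodule_of_contractible
    (A : Type) [NormedRing A] [NormedAlgebra ℂ A] [CompleteSpace A]
    (hA : Contractible A)
    (E : Type) [NormedAddCommGroup E] [NormedSpace ℂ E] [CompleteSpace E]
    (B : BanachBimodule A E)
    (hBl_one : ∀ x, B.l 1 x = x) (hBr_one : ∀ x, B.r 1 x = x)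
    (F : Submodule ℂ E) (hFclosed : IsClosed (F : Set E))
    (hFl : ∀ c : A, ∀ x ∈ F, B.l c x ∈ F) (hFr : ∀ c : A, ∀ x ∈ F, B.r c x ∈ F)
    (hcompl : ∃ p : E →L[ℂ] E, (∀ x, p x ∈ F) ∧ ∀ x ∈ F, p x = x) :
    ∃ G : Submodule ℂ E, IsClosed (G : Set E) ∧
      (∀ c : A, ∀ x ∈ G, B.l c x ∈ G) ∧ (∀ c : A, ∀ x ∈ G, B.r c x ∈ G) ∧
      IsCompl F G := by
  obtain ⟨p, hp1, hp2⟩ := hcompl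
  -- Step 1: make the projection commute with the left action.
  set cL : (E →L[ℂ] E) →L[ℂ] (E →L[ℂ] E) →L[ℂ] (E →L[ℂ] E) :=
    ContinuousLinearMap.compL ℂ E E E with hcL
  set l₁ : A →L[ℂ] (E →L[ℂ] E) →L[ℂ] (E →L[ℂ] E) := cL.comp B.l with hl₁
  set r₁ : A →L[ℂ] (E →L[ℂ] E) →L[ℂ] (E →L[ℂ] E) := cL.flip.comp B.l with hr₁
  have l₁_apply : ∀ a T x, l₁ a T x = B.l a (T x) := fun a T x => rfl
  have r₁_apply : ∀ a T x, r₁ a T x = T (B.l a x) := fun a T x => rfl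
  set N₁ : Submodule ℂ (E →L[ℂ] E) :=
    { carrier := {T | (∀ x, T x ∈ F) ∧ ∀ x ∈ F, T x = 0}
      add_mem' := fun hS hT => ⟨fun x => F.add_mem (hS.1 x) (hT.1 x),
        fun x hx => by simp [ContinuousLinearMap.add_apply, hS.2 x hx, hT.2 x hx]⟩
      zero_mem' := ⟨fun x => F.zero_mem, fun x hx => rfl⟩
      smul_mem' := fun c T hT => ⟨fun x => F.smul_mem c (hT.1 x),
        fun x hx => by simp [ContinuousLinearMap.smul_apply, hT.2 x hx]⟩ } with hN₁def
  have hN₁ : IsClosed (N₁ : Set (E →L[ℂ] E)) := by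
    have : (N₁ : Set (E →L[ℂ] E)) =
        (⋂ x, {T : E →L[ℂ] E | T x ∈ F}) ∩ (⋂ x ∈ F, {T : E →L[ℂ] E | T x = 0}) := by
      ext T
      simp only [Set.mem_inter_iff, Set.mem_iInter, Set.mem_setOf_eq]
      rfl
    rw [this]
    refine IsClosed.inter (isClosed_iInter fun x => ?_)
      (isClosed_biInter fun x hx => ?_)
    · exact hFclosed.preimage (ContinuousLinearMap.apply ℂ E x).continuous
    · exact isClosed_eq (ContinuousLinearMap.apply ℂ E x).continuous continuous_const
  have hN₁mem : ∀ T : E →L[ℂ] E,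
      T ∈ N₁ ↔ (∀ x, T x ∈ F) ∧ ∀ x ∈ F, T x = 0 := fun T => Iff.rfl
  set D₁ : A →L[ℂ] (E →L[ℂ] E) := l₁.flip p - r₁.flip p with hD₁def
  have D₁_apply : ∀ a x, D₁ a x = B.l a (p x) - p (B.l a x) := fun a x => rfl
  obtain ⟨v, hvN, hv⟩ := exists_inner hA l₁ r₁
    (fun a b T => by ext x; simp only [l₁_apply, B.l_mul])
    (fun a b T => by ext x; simp only [r₁_apply, B.l_mul])
    (fun a b T => by ext x; simp only [l₁_apply, r₁_apply])
    N₁ hN₁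
    (fun a T hT => ⟨fun x => hFl a _ (hT.1 x), fun x hx => by
      simp only [l₁_apply, hT.2 x hx, map_zero]⟩)
    (fun a T hT => ⟨fun x => hT.1 _, fun x hx => by
      simp only [r₁_apply, hT.2 _ (hFl a x hx)]⟩)
    D₁
    (fun a => ⟨fun x => F.sub_mem (hFl a _ (hp1 x)) (hp1 _), fun x hx => by
      rw [D₁_apply, hp2 x hx, hp2 _ (hFl a x hx), sub_self]⟩)
    (fun a b => by
      ext x
      simp only [D₁_apply, ContinuousLinearMap.add_apply, l₁_apply, r₁_apply,
        B.l_mul, map_sub]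
      abel)
  have hv' : ∀ a x, B.l a (p x) - p (B.l a x) = B.l a (v x) - v (B.l a x) := by
    intro a x
    have := congrFun (congrArg (fun T : E →L[ℂ] E => (T : E → E)) (hv a)) x
    simpa only [D₁_apply, ContinuousLinearMap.sub_apply, l₁_apply, r₁_apply] using this
  set q₀ : E →L[ℂ] E := p - v with hq₀def
  have hq₀F : ∀ x, q₀ x ∈ F := fun x => F.sub_mem (hp1 x) (hvN.1 x)
  have hq₀id : ∀ x ∈ F, q₀ x = x := fun x hx => by
    simp [hq₀def, hp2 x hx, hvN.2 x hx]
  have hq₀l : ∀ a x, B.l a (q₀ x) = q₀ (B.l a x) := by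
    intro a x
    have h := hv' a x
    simp only [hq₀def, ContinuousLinearMap.sub_apply, map_sub]
    linear_combination (norm := abel) h
  -- Step 2: make it commute with the right action too.
  set l₂ : A →L[ℂ] (E →L[ℂ] E) →L[ℂ] (E →L[ℂ] E) := cL.flip.comp B.r with hl₂
  set r₂ : A →L[ℂ] (E →L[ℂ] E) →L[ℂ] (E →L[ℂ] E) := cL.comp B.r with hr₂
  have l₂_apply : ∀ a T x, l₂ a T x = T (B.r a x) := fun a T x => rfl
  have r₂_apply : ∀ a T x, r₂ a T x = B.r a (T x) := fun a T x => rfl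
  set N₂ : Submodule ℂ (E →L[ℂ] E) :=
    { carrier := {T | ((∀ x, T x ∈ F) ∧ ∀ x ∈ F, T x = 0) ∧
        ∀ c x, B.l c (T x) = T (B.l c x)}
      add_mem' := fun hS hT => ⟨⟨fun x => F.add_mem (hS.1.1 x) (hT.1.1 x),
          fun x hx => by simp [ContinuousLinearMap.add_apply, hS.1.2 x hx, hT.1.2 x hx]⟩,
        fun c x => by simp [ContinuousLinearMap.add_apply, map_add, hS.2 c x, hT.2 c x]⟩
      zero_mem' := ⟨⟨fun x => F.zero_mem, fun x hx => rfl⟩, fun c x => by simp⟩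
      smul_mem' := fun a T hT => ⟨⟨fun x => F.smul_mem a (hT.1.1 x),
          fun x hx => by simp [ContinuousLinearMap.smul_apply, hT.1.2 x hx]⟩,
        fun c x => by simp [ContinuousLinearMap.smul_apply, map_smul, hT.2 c x]⟩ } with hN₂def
  have hN₂ : IsClosed (N₂ : Set (E →L[ℂ] E)) := by
    have : (N₂ : Set (E →L[ℂ] E)) =
        ((⋂ x, {T : E →L[ℂ] E | T x ∈ F}) ∩ (⋂ x ∈ F, {T : E →L[ℂ] E | T x = 0})) ∩
        (⋂ c : A, ⋂ x : E, {T : E →L[ℂ] E | B.l c (T x) = T (B.l c x)}) := by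
      ext T
      simp only [Set.mem_inter_iff, Set.mem_iInter, Set.mem_setOf_eq]
      rfl
    rw [this]
    refine IsClosed.inter (IsClosed.inter (isClosed_iInter fun x => ?_)
      (isClosed_biInter fun x hx => ?_)) (isClosed_iInter fun c => isClosed_iInter fun x => ?_)
    · exact hFclosed.preimage (ContinuousLinearMap.apply ℂ E x).continuous
    · exact isClosed_eq (ContinuousLinearMap.apply ℂ E x).continuous continuous_const
    · exact isClosed_eq ((B.l c).continuous.comp (ContinuousLinearMap.apply ℂ E x).continuous)
        (ContinuousLinearMap.apply ℂ E (B.l c x)).continuous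
  set D₂ : A →L[ℂ] (E →L[ℂ] E) := r₂.flip q₀ - l₂.flip q₀ with hD₂def
  have D₂_apply : ∀ a x, D₂ a x = B.r a (q₀ x) - q₀ (B.r a x) := fun a x => rfl
  obtain ⟨w, hwN, hw⟩ := exists_inner hA l₂ r₂
    (fun a b T => by ext x; simp only [l₂_apply, B.r_mul])
    (fun a b T => by ext x; simp only [r₂_apply, B.r_mul])
    (fun a b T => by ext x; simp only [l₂_apply, r₂_apply])
    N₂ hN₂
    (fun a T hT => ⟨⟨fun x => hT.1.1 _, fun x hx => hT.1.2 _ (hFr a x hx)⟩,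
      fun c x => by simp only [l₂_apply, hT.2 c _, B.lr_comm]⟩)
    (fun a T hT => ⟨⟨fun x => hFr a _ (hT.1.1 x), fun x hx => by
        simp only [r₂_apply, hT.1.2 x hx, map_zero]⟩,
      fun c x => by rw [r₂_apply, r₂_apply, B.lr_comm, hT.2 c x]⟩)
    D₂
    (fun a => ⟨⟨fun x => F.sub_mem (hFr a _ (hq₀F x)) (hq₀F _), fun x hx => by
        rw [D₂_apply, hq₀id x hx, hq₀id _ (hFr a x hx), sub_self]⟩,
      fun c x => by
        simp only [D₂_apply, map_sub, B.lr_comm, hq₀l]⟩)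
    (fun a b => by
      ext x
      simp only [D₂_apply, ContinuousLinearMap.add_apply, l₂_apply, r₂_apply,
        B.r_mul, map_sub]
      abel)
  have hw' : ∀ a x, B.r a (q₀ x) - q₀ (B.r a x) = w (B.r a x) - B.r a (w x) := by
    intro a x
    have := congrFun (congrArg (fun T : E →L[ℂ] E => (T : E → E)) (hw a)) x
    simpa only [D₂_apply, ContinuousLinearMap.sub_apply, l₂_apply, r₂_apply] using this
  set q : E →L[ℂ] E := q₀ + w with hqdef
  have hqF : ∀ x, q x ∈ F := fun x => F.add_mem (hq₀F x) (hwN.1.1 x)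
  have hqid : ∀ x ∈ F, q x = x := fun x hx => by
    simp [hqdef, hq₀id x hx, hwN.1.2 x hx]
  have hql : ∀ c x, B.l c (q x) = q (B.l c x) := fun c x => by
    simp only [hqdef, ContinuousLinearMap.add_apply, map_add, hq₀l, hwN.2 c x]
  have hqr : ∀ a x, B.r a (q x) = q (B.r a x) := by
    intro a x
    have h := hw' a x
    simp only [hqdef, ContinuousLinearMap.add_apply, map_add]
    linear_combination (norm := abel) h
  refine ⟨q.ker, ?_, ?_, ?_, ?_⟩
  · exact ContinuousLinearMap.isClosed_ker q
  · intro c x hx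
    have hx0 : q x = 0 := hx
    simp only [LinearMap.mem_ker, ContinuousLinearMap.coe_coe, ← hql, hx0, map_zero]
  · intro c x hx
    have hx0 : q x = 0 := hx
    simp only [LinearMap.mem_ker, ContinuousLinearMap.coe_coe, ← hqr, hx0, map_zero]
  · constructor
    · rw [disjoint_iff_inf_le]
      intro x hx
      have h1 : q x = x := hqid x hx.1
      have h2 : q x = 0 := hx.2
      have hx0 : x = 0 := by rw [← h1, h2]
      simp [hx0]
    · rw [codisjoint_iff_le_sup]
      intro x _
      have hker : x - q x ∈ q.ker := by
        have : q (x - q x) = 0 := by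
          rw [map_sub, hqid (q x) (hqF x), sub_self]
        exact this
      exact Submodule.mem_sup.2 ⟨q x, hqF x, x - q x, hker, by abel⟩
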